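/- Let a(z) be the formal solution in 1 + z^{-(r+1)}ℂ[[z^{-(r+1)}]] of S_z^r a = (−z)^r a, and suppose the formal orthogonality relations Res_z[ (S_z^⋆)^m(a(ωz)) · S_z^n a(z) ] = 0 hold for all m, n ≥ 0 (ω = e^{iπ/(r+1)}). Let d(z) ∈ 1 + z^{-(r+1)}ℂ[[z^{-(r+1)}]] be the unique solution of −S_z^⋆(d(z)/z) = a(ωz). Then the formal series Ψ(x) := Res_z[ d(z) · Σ_{n≥0} ((−1)^n/n!) S_z^n a(z) x^n · z^{-1} ] is identically equal to 1 as a formal power series in x. -/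

import Mathlib

open HahnSeries Pointwise

/-- The operator `S_z = z^{1-r} ∂_z - (r-1)/(2 z^r) - z` acting on formal Laurent
series with finitely many positive powers of `z`, written in the variable
`t = z⁻¹` (so `coeff m` is the coefficient of `z^{-m}`). -/
noncomputable def Sop (r : ℕ) (f : LaurentSeries ℂ) : LaurentSeries ℂ where
  coeff m := ((r + 1 : ℂ) / 2 - m) * f.coeff (m - r) - f.coeff (m + 1)
  isPWO_support' := by
    have h : (Function.support fun m : ℤ =>
        ((r + 1 : ℂ) / 2 - m) * f.coeff (m - r) - f.coeff (m + 1))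
        ⊆ (f.support + {(r : ℤ)}) ∪ (f.support + ({(-1 : ℤ)} : Set ℤ)) := by
      intro m hm
      simp only [Function.mem_support] at hm
      by_cases h1 : f.coeff (m - (r : ℤ)) = 0
      · have h2 : f.coeff (m + 1) ≠ 0 := fun h2 => hm (by rw [h1, h2]; ring)
        right
        exact Set.mem_add.mpr ⟨m + 1, by simpa using h2, -1, rfl, by ring⟩
      · left
        exact Set.mem_add.mpr ⟨m - r, by simpa using h1, r, rfl, by ring⟩
    exact ((f.isPWO_support.add (Set.isPWO_singleton (r : ℤ))).union
      (f.isPWO_support.add (Set.isPWO_singleton (-1 : ℤ)))).mono h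

/-- The formal adjoint `S_z^⋆ = -z^{1-r} ∂_z + (r-1)/(2 z^r) - z`. -/
noncomputable def Sstar (r : ℕ) (f : LaurentSeries ℂ) : LaurentSeries ℂ where
  coeff m := ((m : ℂ) - (r + 1) / 2) * f.coeff (m - r) - f.coeff (m + 1)
  isPWO_support' := by
    have h : (Function.support fun m : ℤ =>
        ((m : ℂ) - (r + 1) / 2) * f.coeff (m - r) - f.coeff (m + 1))
        ⊆ (f.support + {(r : ℤ)}) ∪ (f.support + ({(-1 : ℤ)} : Set ℤ)) := by
      intro m hm
      simp only [Function.mem_support] at hm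
      by_cases h1 : f.coeff (m - (r : ℤ)) = 0
      · have h2 : f.coeff (m + 1) ≠ 0 := fun h2 => hm (by rw [h1, h2]; ring)
        right
        exact Set.mem_add.mpr ⟨m + 1, by simpa using h2, -1, rfl, by ring⟩
      · left
        exact Set.mem_add.mpr ⟨m - r, by simpa using h1, r, rfl, by ring⟩
    exact ((f.isPWO_support.add (Set.isPWO_singleton (r : ℤ))).union
      (f.isPWO_support.add (Set.isPWO_singleton (-1 : ℤ)))).mono h

/-- Substitution `z ↦ ω z` on a formal Laurent series (`coeff m` is the
coefficient of `z^{-m}`, which gets multiplied by `ω^{-m}`). -/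
noncomputable def rot (ω : ℂ) (f : LaurentSeries ℂ) : LaurentSeries ℂ where
  coeff m := ω ^ (-m) * f.coeff m
  isPWO_support' := f.isPWO_support.mono (fun m hm => by
    simp only [Function.mem_support] at hm ⊢
    exact fun h => hm (by rw [h, mul_zero]))


lemma shift_coeff (k : ℤ) (f : LaurentSeries ℂ) (m : ℤ) :
    ((HahnSeries.single k (1 : ℂ)) * f).coeff m = f.coeff (m - k) := by
  have := HahnSeries.coeff_single_mul_add (r := (1:ℂ)) (x := f) (a := m - k) (b := k)
  simpa using this

noncomputable def Eop (f : LaurentSeries ℂ) : LaurentSeries ℂ where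
  coeff m := (m : ℂ) * f.coeff m
  isPWO_support' := f.isPWO_support.mono (fun m hm => by
    simp only [Function.mem_support] at hm ⊢
    exact fun h => hm (by rw [h, mul_zero]))

lemma Eop_support (f : LaurentSeries ℂ) : (Eop f).support ⊆ f.support := by
  intro m hm
  simp only [HahnSeries.mem_support, Eop] at hm ⊢
  exact fun h => hm (by rw [h, mul_zero])

lemma Eop_leibniz (f g : LaurentSeries ℂ) (m : ℤ) :
    ((Eop f) * g).coeff m + (f * Eop g).coeff m = (m : ℂ) * (f * g).coeff m := by
  rw [HahnSeries.coeff_mul_left' f.isPWO_support (Eop_support f),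
    HahnSeries.coeff_mul_right' g.isPWO_support (Eop_support g),
    HahnSeries.coeff_mul, Finset.mul_sum, ← Finset.sum_add_distrib]
  refine Finset.sum_congr rfl (fun ij hij => ?_)
  rw [Finset.mem_addAntidiagonal] at hij
  have : ((ij.1 : ℂ) + ij.2) = (m : ℂ) := by
    rw [← hij.2.2]; push_cast; ring
  show (ij.1 : ℂ) * f.coeff ij.1 * g.coeff ij.2
      + f.coeff ij.1 * ((ij.2 : ℂ) * g.coeff ij.2) = _
  rw [← this]; ring

lemma Sop_eq (r : ℕ) (g : LaurentSeries ℂ) :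
    Sop r g = HahnSeries.single (0:ℤ) ((r + 1 : ℂ) / 2) * (HahnSeries.single (r : ℤ) 1 * g)
      - Eop (HahnSeries.single (r : ℤ) 1 * g) - HahnSeries.single (-1 : ℤ) 1 * g := by
  ext m
  simp only [HahnSeries.coeff_sub, HahnSeries.coeff_single_zero_mul, shift_coeff, Eop, Sop]
  have h : m - (-1 : ℤ) = m + 1 := by ring
  rw [h]; ring

lemma Sstar_eq (r : ℕ) (f : LaurentSeries ℂ) :
    Sstar r f = Eop (HahnSeries.single (r : ℤ) 1 * f)
      - HahnSeries.single (0:ℤ) ((r + 1 : ℂ) / 2) * (HahnSeries.single (r : ℤ) 1 * f)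
      - HahnSeries.single (-1 : ℤ) 1 * f := by
  ext m
  simp only [HahnSeries.coeff_sub, HahnSeries.coeff_single_zero_mul, shift_coeff, Eop, Sstar]
  have h : m - (-1 : ℤ) = m + 1 := by ring
  rw [h]; ring

lemma Eop_shift (r : ℕ) (f : LaurentSeries ℂ) :
    Eop (HahnSeries.single (r : ℤ) 1 * f)
      = HahnSeries.single (0:ℤ) (r : ℂ) * (HahnSeries.single (r : ℤ) 1 * f)
        + HahnSeries.single (r : ℤ) 1 * Eop f := by
  ext m
  simp only [HahnSeries.coeff_add, HahnSeries.coeff_single_zero_mul, shift_coeff, Eop]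
  push_cast; ring

lemma key_ibp (r : ℕ) (f g : LaurentSeries ℂ) :
    (f * Sop r g).coeff 1 = ((Sstar r f) * g).coeff 1 := by
  rw [Sop_eq, Sstar_eq, Eop_shift, Eop_shift]
  have e1 : f * (HahnSeries.single (0:ℤ) ((r + 1 : ℂ) / 2) * (HahnSeries.single (r : ℤ) 1 * g)
        - (HahnSeries.single (0:ℤ) (r : ℂ) * (HahnSeries.single (r : ℤ) 1 * g)
            + HahnSeries.single (r : ℤ) 1 * Eop g)
        - HahnSeries.single (-1 : ℤ) 1 * g)
      = HahnSeries.single (0:ℤ) ((r + 1 : ℂ) / 2) * (HahnSeries.single (r : ℤ) 1 * (f * g))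
        - (HahnSeries.single (0:ℤ) (r : ℂ) * (HahnSeries.single (r : ℤ) 1 * (f * g))
            + HahnSeries.single (r : ℤ) 1 * (f * Eop g))
        - HahnSeries.single (-1 : ℤ) 1 * (f * g) := by ring
  have e2 : (HahnSeries.single (0:ℤ) (r : ℂ) * (HahnSeries.single (r : ℤ) 1 * f)
        + HahnSeries.single (r : ℤ) 1 * Eop f
        - HahnSeries.single (0:ℤ) ((r + 1 : ℂ) / 2) * (HahnSeries.single (r : ℤ) 1 * f)
        - HahnSeries.single (-1 : ℤ) 1 * f) * g
      = HahnSeries.single (0:ℤ) (r : ℂ) * (HahnSeries.single (r : ℤ) 1 * (f * g))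
        + HahnSeries.single (r : ℤ) 1 * (Eop f * g)
        - HahnSeries.single (0:ℤ) ((r + 1 : ℂ) / 2) * (HahnSeries.single (r : ℤ) 1 * (f * g))
        - HahnSeries.single (-1 : ℤ) 1 * (f * g) := by ring
  rw [e1, e2]
  simp only [HahnSeries.coeff_sub, HahnSeries.coeff_add, HahnSeries.coeff_single_zero_mul,
    shift_coeff]
  have hD : (f * Eop g).coeff (1 - (r:ℤ)) = ((1 - (r:ℤ)) : ℂ) * (f * g).coeff (1 - (r:ℤ))
      - (Eop f * g).coeff (1 - (r:ℤ)) := by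
    have h := Eop_leibniz f g (1 - (r:ℤ)); push_cast at h ⊢; linear_combination h
  rw [hD]
  push_cast
  ring

/-- `Ψ(x) := Res_z[d(z)·Σ_{n≥0} ((-1)^n/n!) S_z^n a(z) x^n · z^{-1}] = 1` as a formal
power series in `x`: the `n`-th coefficient of `Ψ` is
`((-1)^n/n!)·Res_z[d·S_z^n a·z^{-1}] = ((-1)^n/n!)·(d·S_z^n a).coeff 0`
(the coefficient of `z^0`, i.e. `t^0`).  Here `a ∈ 1 + z^{-(r+1)}ℂ[[z^{-(r+1)}]]`
solves `S_z^r a = (-z)^r a`, the orthogonality relations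
`Res_z[(S⋆)^m(a(ωz))·S_z^n a] = 0` hold, and `d` solves `-S_z^⋆(d/z) = a(ωz)`. -/
theorem Psi_eq_one (r : ℕ) (hr : 2 ≤ r) (a d : LaurentSeries ℂ)
    (ha0 : a.coeff 0 = 1)
    (hasupp : ∀ m : ℤ, a.coeff m ≠ 0 → ∃ k : ℕ, m = ((r : ℤ) + 1) * k)
    (hode : (Sop r)^[r] a = ((-1 : ℂ) ^ r) • (HahnSeries.single (-(r : ℤ)) 1 * a))
    (hd0 : d.coeff 0 = 1)
    (hdsupp : ∀ m : ℤ, d.coeff m ≠ 0 → ∃ k : ℕ, m = ((r : ℤ) + 1) * k)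
    (ω : ℂ) (hω : ω = Complex.exp (Real.pi * Complex.I / (r + 1)))
    (horth : ∀ m n : ℕ,
      (((Sstar r)^[m] (rot ω a)) * (Sop r)^[n] a).coeff 1 = 0)
    (hd : -(Sstar r (HahnSeries.single (1 : ℤ) 1 * d)) = rot ω a) :
    PowerSeries.mk (fun n => ((-1 : ℂ) ^ n / n.factorial) * (d * (Sop r)^[n] a).coeff 0)
      = 1 := by
  ext n
  rw [PowerSeries.coeff_mk, PowerSeries.coeff_one]
  cases n with
  | zero =>
    have hda : (d * a).coeff 0 = 1 := by
      rw [HahnSeries.coeff_mul]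
      have hmem : ((0:ℤ), (0:ℤ)) ∈
          Finset.antidiagonal d.isPWO_support a.isPWO_support 0 := by
        rw [Finset.mem_addAntidiagonal]
        refine ⟨?_, ?_, by ring⟩ <;> simp [HahnSeries.mem_support, ha0, hd0]
      rw [Finset.sum_eq_single_of_mem _ hmem ?_]
      · rw [ha0, hd0]; ring
      · intro p hp hne
        exfalso
        rw [Finset.mem_addAntidiagonal] at hp
        obtain ⟨k, hk⟩ := hdsupp p.1 hp.1
        obtain ⟨k', hk'⟩ := hasupp p.2 hp.2.1
        have hsum : ((r : ℤ) + 1) * k + ((r : ℤ) + 1) * k' = 0 := by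
          rw [← hk, ← hk']; exact hp.2.2
        have hr1 : (0:ℤ) < (r : ℤ) + 1 := by positivity
        have hk0 : (k : ℤ) = 0 ∧ (k' : ℤ) = 0 := by
          constructor <;> nlinarith [Int.natCast_nonneg k, Int.natCast_nonneg k']
        exact hne (Prod.ext (by rw [hk, hk0.1, mul_zero]) (by rw [hk', hk0.2, mul_zero]))
    simp [hda]
  | succ m =>
    have hshift : ∀ h : LaurentSeries ℂ,
        ((HahnSeries.single (1:ℤ) 1 * d) * h).coeff 1 = (d * h).coeff 0 := by
      intro h
      rw [mul_assoc, shift_coeff]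
      norm_num
    have h1 : (d * (Sop r)^[m+1] a).coeff 0 = 0 := by
      rw [← hshift, Function.iterate_succ_apply', key_ibp, ← neg_neg (Sstar r _), hd]
      have h2 := horth 0 m
      simp only [Function.iterate_zero, id_eq] at h2
      rw [neg_mul, HahnSeries.coeff_neg, h2, neg_zero]
    rw [if_neg (Nat.succ_ne_zero m), h1, mul_zero]
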